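/- Suppose P ∈ [0,1/2) and Δv = V_max/T for an integer T ≥ 1. Then the measure μ = Σ_{l=0}^{T} c_l · δ_{l·Δv}, whose atoms are located at the quantized velocities 0, Δv, 2Δv, …, V_max with the recursively defined weights c_0,…,c_T, is a weak stationary solution of the δ model. -/

import Mathlib

open MeasureTheory

/-- The δ-model transition kernel: for pre-interaction speeds `vs` (candidate) and
`vf` (field), the probability measure
`A_δ(vs,vf) = (1−P)·δ_{min(vs,vf)} + P·δ_{min(vs+Δv, Vmax)}`. -/
noncomputable def deltaKernel (Vmax Δv P : ℝ) (vs vf : ℝ) : Measure ℝ :=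
  ENNReal.ofReal (1 - P) • Measure.dirac (min vs vf)
    + ENNReal.ofReal P • Measure.dirac (min (vs + Δv) Vmax)

/-- `μ` is a weak stationary solution of the δ model: for every continuous test
function `φ`, `∫∫ (∫ φ dA_δ(v_*,v^*)) dμ(v_*) dμ(v^*) = ρ ∫ φ dμ`. -/
def IsWeakStationaryDelta (Vmax Δv ρ P : ℝ) (μ : Measure ℝ) : Prop :=
  ∀ φ : ℝ → ℝ, Continuous φ →
    (∫ vf, ∫ vs, (∫ v, φ v ∂(deltaKernel Vmax Δv P vs vf)) ∂μ ∂μ) = ρ * ∫ v, φ v ∂μ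

lemma integrable_dirac'' (f : ℝ → ℝ) (a : ℝ) :
    Integrable f (Measure.dirac a) := by
  refine (integrable_const (f a)).congr ?_
  rw [Filter.EventuallyEq, ae_dirac_eq, Filter.eventually_pure]

lemma integrable_smul_dirac (f : ℝ → ℝ) (a : ℝ) (r : ℝ) :
    Integrable f (ENNReal.ofReal r • Measure.dirac a) :=
  (integrable_dirac'' f a).smul_measure ENNReal.ofReal_ne_top

lemma integral_sum_dirac (n : ℕ) (c : ℕ → ℝ) (hc : ∀ l, l < n → 0 ≤ c l) (x : ℕ → ℝ)
    (f : ℝ → ℝ) :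
    ∫ v, f v ∂(∑ l ∈ Finset.range n, ENNReal.ofReal (c l) • Measure.dirac (x l))
      = ∑ l ∈ Finset.range n, c l * f (x l) := by
  rw [integral_finset_sum_measure (fun i _ => integrable_smul_dirac f _ _)]
  refine Finset.sum_congr rfl fun i hi => ?_
  rw [integral_smul_measure, integral_dirac, ENNReal.toReal_ofReal (hc i (Finset.mem_range.mp hi)),
    smul_eq_mul]

lemma integral_deltaKernel (Vmax Δv P : ℝ) (hP0 : 0 ≤ P) (hP1 : P ≤ 1) (vs vf : ℝ)
    (φ : ℝ → ℝ) :
    ∫ v, φ v ∂(deltaKernel Vmax Δv P vs vf)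
      = (1 - P) * φ (min vs vf) + P * φ (min (vs + Δv) Vmax) := by
  unfold deltaKernel
  rw [integral_add_measure (integrable_smul_dirac φ _ _) (integrable_smul_dirac φ _ _),
    integral_smul_measure, integral_smul_measure, integral_dirac, integral_dirac,
    ENNReal.toReal_ofReal (by linarith), ENNReal.toReal_ofReal hP0, smul_eq_mul, smul_eq_mul]


lemma sum_sum_min (a g : ℕ → ℝ) (n : ℕ) :
    ∑ j ∈ Finset.range n, ∑ k ∈ Finset.range n, a j * a k * g (min k j)
      = ∑ l ∈ Finset.range n,
          a l * (a l + 2 * ∑ m ∈ Finset.Ico (l + 1) n, a m) * g l := by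
  induction n with
  | zero => simp
  | succ n ih =>
    have hin : ∀ j ∈ Finset.range n,
        ∑ k ∈ Finset.range (n + 1), a j * a k * g (min k j)
          = (∑ k ∈ Finset.range n, a j * a k * g (min k j)) + a j * a n * g j := by
      intro j hj
      rw [Finset.sum_range_succ, min_eq_right (le_of_lt (Finset.mem_range.mp hj))]
    have hrow : ∑ k ∈ Finset.range (n + 1), a n * a k * g (min k n)
        = (∑ k ∈ Finset.range n, a n * a k * g k) + a n * a n * g n := by
      rw [Finset.sum_range_succ, min_self]
      congr 1
      exact Finset.sum_congr rfl fun k hk => by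
        rw [min_eq_left (le_of_lt (Finset.mem_range.mp hk))]
    rw [Finset.sum_range_succ, Finset.sum_congr rfl hin, hrow, Finset.sum_add_distrib, ih]
    rw [Finset.sum_range_succ (fun l => a l * (a l + 2 * ∑ m ∈ Finset.Ico (l + 1) (n + 1), a m) * g l)]
    have hIco : ∀ l ∈ Finset.range n,
        a l * (a l + 2 * ∑ m ∈ Finset.Ico (l + 1) (n + 1), a m) * g l
          = a l * (a l + 2 * ∑ m ∈ Finset.Ico (l + 1) n, a m) * g l
            + 2 * (a l * a n * g l) := by
      intro l hl
      rw [Finset.sum_Ico_succ_top (Finset.mem_range.mp hl)]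
      ring
    rw [Finset.sum_congr rfl hIco, Finset.sum_add_distrib, Finset.Ico_self, Finset.sum_empty]
    have e1 : ∑ k ∈ Finset.range n, a n * a k * g k = ∑ k ∈ Finset.range n, a k * a n * g k :=
      Finset.sum_congr rfl fun k _ => by ring
    have e2 : ∑ k ∈ Finset.range n, 2 * (a k * a n * g k)
        = (∑ k ∈ Finset.range n, a k * a n * g k) + ∑ k ∈ Finset.range n, a k * a n * g k := by
      rw [← Finset.sum_add_distrib]
      exact Finset.sum_congr rfl fun k _ => by ring
    rw [e1, e2]
    ring


lemma coeff_identity (ρ P : ℝ) (T : ℕ) (hT : 1 ≤ T) (hρ : 0 < ρ) (hP0 : 0 ≤ P)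
    (hP : P < 1 / 2)
    (c : ℕ → ℝ)
    (hc0 : c 0 = ρ * (1 - 2 * P) / (1 - P))
    (hcl : ∀ l, 1 ≤ l → l ≤ T - 1 →
      c l = ((1 - 2 * P) * ρ - 2 * (1 - P) * (∑ m ∈ Finset.range l, c m)
        + Real.sqrt (((1 - 2 * P) * ρ - 2 * (1 - P) * (∑ m ∈ Finset.range l, c m)) ^ 2
            + 4 * P * (1 - P) * ρ * c (l - 1))) / (2 * (1 - P)))
    (hcT : c T = ρ - ∑ m ∈ Finset.range T, c m) :
    (∀ l, l < T + 1 → 0 ≤ c l) ∧ ∀ g : ℕ → ℝ,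
      (1 - P) * (∑ l ∈ Finset.range (T + 1),
            c l * (c l + 2 * ∑ m ∈ Finset.Ico (l + 1) (T + 1), c m) * g l)
          + P * ρ * (∑ k ∈ Finset.range (T + 1), c k * g (min (k + 1) T))
        = ρ * ∑ l ∈ Finset.range (T + 1), c l * g l := by
  have h1P : 0 < 1 - P := by linarith
  set S : ℕ → ℝ := fun k => ∑ m ∈ Finset.range k, c m with hS
  -- quadratic identity from the recursion
  have quad : ∀ l, 1 ≤ l → l ≤ T - 1 → 0 ≤ c (l - 1) →
      (1 - P) * c l ^ 2 + 2 * (1 - P) * S l * c l - P * ρ * c (l - 1)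
          = (1 - 2 * P) * ρ * c l ∧ 0 ≤ c l := by
    intro l hl1 hl2 hprev
    set B : ℝ := (1 - 2 * P) * ρ - 2 * (1 - P) * S l with hB
    set D : ℝ := B ^ 2 + 4 * P * (1 - P) * ρ * c (l - 1) with hD
    have hD0 : 0 ≤ D := by
      have : 0 ≤ 4 * P * (1 - P) * ρ * c (l - 1) := by positivity
      nlinarith [sq_nonneg B]
    have hsq : Real.sqrt D ^ 2 = D := Real.sq_sqrt hD0
    have hs0 : 0 ≤ Real.sqrt D := Real.sqrt_nonneg D
    have hE : 0 ≤ 4 * P * (1 - P) * ρ * c (l - 1) := by positivity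
    have hB2 : B ^ 2 ≤ D := by rw [hD]; linarith
    have habs : |B| ≤ Real.sqrt D := by
      rw [← Real.sqrt_sq_eq_abs]
      exact Real.sqrt_le_sqrt hB2
    have hBs : -B ≤ Real.sqrt D := (neg_le_abs B).trans habs
    have hval : 2 * (1 - P) * c l = B + Real.sqrt D := by
      rw [hcl l hl1 hl2]; field_simp
      simp only [hD, hB, hS]; ring_nf
    have hc1 : 0 ≤ c l := by
      have : 0 ≤ B + Real.sqrt D := by linarith
      nlinarith
    refine ⟨?_, hc1⟩
    have hDexp : (2 * (1 - P) * c l - B) ^ 2 = D := by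
      have h' : 2 * (1 - P) * c l - B = Real.sqrt D := by linarith
      rw [h', hsq]
    rw [hD, hB] at hDexp
    have h4 : (4 * (1 - P)) * ((1 - P) * c l ^ 2 + 2 * (1 - P) * S l * c l - P * ρ * c (l - 1))
        = (4 * (1 - P)) * ((1 - 2 * P) * ρ * c l) := by linear_combination hDexp
    exact mul_left_cancel₀ (by positivity) h4
  -- invariant bundle by induction
  have main : ∀ k, 1 ≤ k → k ≤ T →
      (∀ m, m < k → 0 ≤ c m) ∧
      ρ * (ρ - S k) = (1 - P) * (ρ - S k) ^ 2 + P * ρ * (ρ - S (k - 1)) ∧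
      S k ≤ ρ := by
    intro k hk1
    induction k with
    | zero => omega
    | succ k ih =>
      intro hkT
      rcases Nat.eq_or_lt_of_le hk1 with h1 | h1
      · -- k + 1 = 1, i.e. k = 0
        have hk0 : k = 0 := by omega
        subst hk0
        have hS1 : S 1 = c 0 := by simp [hS]
        have hS0 : S 0 = 0 := by simp [hS]
        have hc00 : 0 ≤ c 0 := by
          rw [hc0]; exact div_nonneg (by nlinarith) (by linarith)
        refine ⟨fun m hm => by rw [Nat.lt_one_iff.mp hm]; exact hc00, ?_, ?_⟩
        · simp only [hS1, hS0, Nat.sub_self]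
          rw [hc0]; field_simp; ring
        · rw [hS1, hc0]
          rw [div_le_iff₀ h1P]
          nlinarith
      · -- k ≥ 1
        have hk1' : 1 ≤ k := by omega
        obtain ⟨hnn, hJ, hSle⟩ := ih hk1' (by omega)
        have hlT : k ≤ T - 1 := by omega
        obtain ⟨hQ, hck⟩ := quad k hk1' hlT (hnn (k - 1) (by omega))
        have hSk1 : S (k + 1) = S k + c k := by simp [hS, Finset.sum_range_succ]
        have hSkk : S k = S (k - 1) + c (k - 1) := by
          have : k = (k - 1) + 1 := by omega
          rw [this]; simp [hS, Finset.sum_range_succ]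
        have hnn' : ∀ m, m < k + 1 → 0 ≤ c m := by
          intro m hm
          rcases Nat.lt_or_ge m k with h | h
          · exact hnn m h
          · have : m = k := by omega
            exact this ▸ hck
        have hJ' : ρ * (ρ - S (k + 1))
            = (1 - P) * (ρ - S (k + 1)) ^ 2 + P * ρ * (ρ - S (k + 1 - 1)) := by
          have hred : k + 1 - 1 = k := by omega
          rw [hred, hSk1]
          linear_combination hJ - hQ + P * ρ * hSkk
        refine ⟨hnn', hJ', ?_⟩
        have hEk1 : 0 ≤ ρ - S k := by linarith
        have hred : k + 1 - 1 = k := by omega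
        rw [hred] at hJ'
        nlinarith [sq_nonneg (ρ - S (k + 1)), mul_nonneg (mul_nonneg hP0 hρ.le) hEk1]
  obtain ⟨hnnT, hJT, hSTle⟩ := main T hT le_rfl
  have htotal : S (T + 1) = ρ := by
    have : S (T + 1) = S T + c T := by simp [hS, Finset.sum_range_succ]
    rw [this, hcT]; simp [hS]
  have hcTnn : 0 ≤ c T := by rw [hcT]; exact sub_nonneg.mpr hSTle
  have hnn : ∀ l, l < T + 1 → 0 ≤ c l := by
    intro l hl
    rcases Nat.lt_or_ge l T with h | h
    · exact hnnT l h
    · have : l = T := by omega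
      exact this ▸ hcTnn
  refine ⟨hnn, fun g => ?_⟩
  -- rewrite tails as ρ - S (l+1)
  have hR : ∀ l, l < T + 1 → ∑ m ∈ Finset.Ico (l + 1) (T + 1), c m = ρ - S (l + 1) := by
    intro l hl
    have := Finset.sum_range_add_sum_Ico c (Nat.succ_le_of_lt hl)
    have h2 : S (l + 1) + ∑ m ∈ Finset.Ico (l + 1) (T + 1), c m = S (T + 1) := this
    rw [htotal] at h2; linarith
  -- key coefficient identities
  obtain ⟨n, rfl⟩ : ∃ n, T = n + 1 := ⟨T - 1, by omega⟩
  have key0 : ρ * c 0 - (1 - P) * c 0 * (c 0 + 2 * (ρ - S 1)) = 0 := by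
    have hS1 : S 1 = c 0 := by simp [hS]
    rw [hS1, hc0]; field_simp; ring
  have key2 : ∀ l, 1 ≤ l → l ≤ n →
      ρ * c l - (1 - P) * c l * (c l + 2 * (ρ - S (l + 1))) = P * ρ * c (l - 1) := by
    intro l hl1 hl2
    obtain ⟨hQ, _⟩ := quad l hl1 (by omega) (hnn (l - 1) (by omega))
    have hSk1 : S (l + 1) = S l + c l := by simp [hS, Finset.sum_range_succ]
    rw [hSk1]
    linear_combination hQ
  have keyT : ρ * c (n + 1) - (1 - P) * c (n + 1) * (c (n + 1) + 2 * (ρ - S (n + 1 + 1)))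
      = P * ρ * (c n + c (n + 1)) := by
    rw [htotal]
    have hcT' : c (n + 1) = ρ - S (n + 1) := by rw [hcT]
    have hSn : S (n + 1) = S n + c n := by simp [hS, Finset.sum_range_succ]
    have hred : n + 1 - 1 = n := by omega
    rw [hred] at hJT
    rw [hcT', hSn]
    rw [hSn] at hJT
    linear_combination hJT
  -- assemble the sum identity
  have htail : ∀ l ∈ Finset.range (n + 1 + 1),
      c l * (c l + 2 * ∑ m ∈ Finset.Ico (l + 1) (n + 1 + 1), c m) * g l
        = c l * (c l + 2 * (ρ - S (l + 1))) * g l := by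
    intro l hl; rw [hR l (Finset.mem_range.mp hl)]
  rw [Finset.sum_congr rfl htail]
  have hsplit : ρ * (∑ l ∈ Finset.range (n + 1 + 1), c l * g l)
      - (1 - P) * ∑ l ∈ Finset.range (n + 1 + 1), c l * (c l + 2 * (ρ - S (l + 1))) * g l
      = ∑ l ∈ Finset.range (n + 1 + 1),
          (ρ * c l - (1 - P) * c l * (c l + 2 * (ρ - S (l + 1)))) * g l := by
    rw [Finset.mul_sum, Finset.mul_sum, ← Finset.sum_sub_distrib]
    exact Finset.sum_congr rfl fun l _ => by ring
  have hgoal : P * ρ * (∑ k ∈ Finset.range (n + 1 + 1), c k * g (min (k + 1) (n + 1)))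
      = ∑ l ∈ Finset.range (n + 1 + 1),
          (ρ * c l - (1 - P) * c l * (c l + 2 * (ρ - S (l + 1)))) * g l := by
    conv_rhs => rw [Finset.sum_range_succ']
    simp only [Nat.zero_add]
    rw [key0, zero_mul, add_zero]
    conv_rhs => rw [Finset.sum_range_succ]
    have hmid : ∀ i ∈ Finset.range n,
        (ρ * c (i + 1) - (1 - P) * c (i + 1) * (c (i + 1) + 2 * (ρ - S (i + 1 + 1)))) * g (i + 1)
          = P * ρ * (c i * g (i + 1)) := by
      intro i hi
      have h2 := key2 (i + 1) (by omega) (by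
        have := Finset.mem_range.mp hi; omega)
      have hred : i + 1 - 1 = i := by omega
      rw [hred] at h2
      rw [h2]; ring
    rw [Finset.sum_congr rfl hmid, keyT]
    -- left side
    conv_lhs => rw [Finset.sum_range_succ]
    have hmin1 : ∀ k ∈ Finset.range (n + 1),
        c k * g (min (k + 1) (n + 1)) = c k * g (k + 1) := by
      intro k hk
      rw [min_eq_left (by have := Finset.mem_range.mp hk; omega)]
    rw [Finset.sum_congr rfl hmin1, min_eq_right (by omega)]
    rw [Finset.sum_range_succ, ← Finset.mul_sum]
    ring
  linarith [hsplit, hgoal]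

lemma final_sum (ρ P : ℝ) (T : ℕ) (c g : ℕ → ℝ)
    (htot : ∑ l ∈ Finset.range (T + 1), c l = ρ)
    (hkey : (1 - P) * (∑ l ∈ Finset.range (T + 1),
          c l * (c l + 2 * ∑ m ∈ Finset.Ico (l + 1) (T + 1), c m) * g l)
        + P * ρ * (∑ k ∈ Finset.range (T + 1), c k * g (min (k + 1) T))
        = ρ * ∑ l ∈ Finset.range (T + 1), c l * g l) :
    ∑ j ∈ Finset.range (T + 1), c j *
        ∑ k ∈ Finset.range (T + 1), c k * ((1 - P) * g (min k j) + P * g (min (k + 1) T))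
      = ρ * ∑ l ∈ Finset.range (T + 1), c l * g l := by
  have step1 : ∀ j ∈ Finset.range (T + 1),
      c j * ∑ k ∈ Finset.range (T + 1), c k * ((1 - P) * g (min k j) + P * g (min (k + 1) T))
        = (1 - P) * ∑ k ∈ Finset.range (T + 1), c j * c k * g (min k j)
          + c j * (P * ∑ k ∈ Finset.range (T + 1), c k * g (min (k + 1) T)) := by
    intro j _
    simp only [Finset.mul_sum, ← Finset.sum_add_distrib]
    exact Finset.sum_congr rfl fun k _ => by ring
  rw [Finset.sum_congr rfl step1, Finset.sum_add_distrib, ← Finset.mul_sum, ← Finset.sum_mul,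
    sum_sum_min c g (T + 1), htot]
  linarith [hkey]

/-- Suppose `P ∈ [0,1/2)` and `Δv = Vmax/T` with `T ≥ 1` an integer.  Then the
measure `μ = Σ_{l=0}^{T} c_l · δ_{l·Δv}`, with atoms at the quantized velocities
`0, Δv, …, Vmax` and the recursively defined weights `c_0, …, c_T`, is a weak
stationary solution of the δ model. -/
theorem statement1 (Vmax Δv ρ P : ℝ) (T : ℕ) (hT : 1 ≤ T)
    (hV : 0 < Vmax) (hρ : 0 < ρ) (hP0 : 0 ≤ P) (hP : P < 1 / 2)
    (hΔv : Δv = Vmax / (T : ℝ))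
    (c : ℕ → ℝ)
    (hc0 : c 0 = ρ * (1 - 2 * P) / (1 - P))
    (hcl : ∀ l, 1 ≤ l → l ≤ T - 1 →
      c l = ((1 - 2 * P) * ρ - 2 * (1 - P) * (∑ m ∈ Finset.range l, c m)
        + Real.sqrt (((1 - 2 * P) * ρ - 2 * (1 - P) * (∑ m ∈ Finset.range l, c m)) ^ 2
            + 4 * P * (1 - P) * ρ * c (l - 1))) / (2 * (1 - P)))
    (hcT : c T = ρ - ∑ m ∈ Finset.range T, c m) :
    IsWeakStationaryDelta Vmax Δv ρ P
      (∑ l ∈ Finset.range (T + 1),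
        ENNReal.ofReal (c l) • Measure.dirac ((l : ℝ) * Δv)) := by
  intro φ hφ
  have hTpos : (0 : ℝ) < (T : ℝ) := by exact_mod_cast Nat.pos_of_ne_zero (by omega)
  have hΔ0 : 0 < Δv := by rw [hΔv]; positivity
  have hVmax : Vmax = (T : ℝ) * Δv := by rw [hΔv]; field_simp
  obtain ⟨hnn, hkey⟩ := coeff_identity ρ P T hT hρ hP0 hP c hc0 hcl hcT
  have htot : ∑ l ∈ Finset.range (T + 1), c l = ρ := by
    rw [Finset.sum_range_succ, hcT]; ring
  have hker : ∀ vs vf : ℝ, ∫ v, φ v ∂(deltaKernel Vmax Δv P vs vf)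
      = (1 - P) * φ (min vs vf) + P * φ (min (vs + Δv) Vmax) := fun vs vf =>
    integral_deltaKernel Vmax Δv P hP0 (by linarith) vs vf φ
  have hin : ∀ vf : ℝ,
      (∫ vs, (∫ v, φ v ∂(deltaKernel Vmax Δv P vs vf))
          ∂(∑ l ∈ Finset.range (T + 1), ENNReal.ofReal (c l) • Measure.dirac ((l : ℝ) * Δv)))
        = ∑ k ∈ Finset.range (T + 1), c k *
            ((1 - P) * φ (min ((k : ℝ) * Δv) vf) + P * φ (min ((k : ℝ) * Δv + Δv) Vmax)) := by
    intro vf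
    simp only [hker]
    exact integral_sum_dirac (T + 1) c hnn (fun l => (l : ℝ) * Δv) _
  simp only [hin]
  rw [integral_sum_dirac (T + 1) c hnn (fun l => (l : ℝ) * Δv) φ,
    integral_sum_dirac (T + 1) c hnn (fun l => (l : ℝ) * Δv) _]
  have hmin1 : ∀ k j : ℕ, min ((k : ℝ) * Δv) ((j : ℝ) * Δv) = ((min k j : ℕ) : ℝ) * Δv := by
    intro k j
    rw [Nat.cast_min, min_mul_of_nonneg _ _ hΔ0.le]
  have hmin2 : ∀ k : ℕ, min ((k : ℝ) * Δv + Δv) Vmax = ((min (k + 1) T : ℕ) : ℝ) * Δv := by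
    intro k
    rw [hVmax, Nat.cast_min, min_mul_of_nonneg _ _ hΔ0.le]
    congr 2
    push_cast; ring
  simp only [hmin1, hmin2]
  exact final_sum ρ P T c (fun l => φ ((l : ℝ) * Δv)) htot (hkey _)
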